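/- If θ₁, θ₂ > 0 satisfy θ₁·cot(θ₁) = θ₂·cot(θ₂) = a with a ∉ {0,1}, sin(θ₁) ≠ 0, sin(θ₂) ≠ 0, and sin²(θ₁) ≠ sin²(θ₂), then (sin²(θ₁)/θ₁²)·f(θ₂) − (sin²(θ₂)/θ₂²)·f(θ₁) ≠ 0, where f(θ) = (π/2)·(cos(θ)sin(θ) − θ)/θ³. -/

import Mathlib

/-- Case I nondegeneracy: the determinant expression is nonzero when `a ∉ {0,1}` and
`sin² θ₁ ≠ sin² θ₂`. -/
theorem caseI_nonzero (θ₁ θ₂ a : ℝ) (h₁ : 0 < θ₁) (h₂ : 0 < θ₂)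
    (hs₁ : Real.sin θ₁ ≠ 0) (hs₂ : Real.sin θ₂ ≠ 0)
    (ha₁ : θ₁ * (Real.cos θ₁ / Real.sin θ₁) = a)
    (ha₂ : θ₂ * (Real.cos θ₂ / Real.sin θ₂) = a)
    (ha0 : a ≠ 0) (ha1 : a ≠ 1)
    (hsin : Real.sin θ₁ ^ 2 ≠ Real.sin θ₂ ^ 2) :
    (Real.sin θ₁ ^ 2 / θ₁ ^ 2) *
        ((Real.pi / 2) * (Real.cos θ₂ * Real.sin θ₂ - θ₂) / θ₂ ^ 3) -
      (Real.sin θ₂ ^ 2 / θ₂ ^ 2) *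
        ((Real.pi / 2) * (Real.cos θ₁ * Real.sin θ₁ - θ₁) / θ₁ ^ 3) ≠ 0 := by
  have ht₁ : θ₁ ≠ 0 := ne_of_gt h₁
  have ht₂ : θ₂ ≠ 0 := ne_of_gt h₂
  have hc1 : θ₁ * Real.cos θ₁ = a * Real.sin θ₁ := by
    field_simp at ha₁; linarith [ha₁]
  have hc2 : θ₂ * Real.cos θ₂ = a * Real.sin θ₂ := by
    field_simp at ha₂; linarith [ha₂]
  have hp1 : θ₁ ^ 2 * (1 - Real.sin θ₁ ^ 2) = a ^ 2 * Real.sin θ₁ ^ 2 := by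
    have h := Real.sin_sq_add_cos_sq θ₁
    linear_combination (θ₁ * Real.cos θ₁ + a * Real.sin θ₁) * hc1 - θ₁ ^ 2 * h
  have hp2 : θ₂ ^ 2 * (1 - Real.sin θ₂ ^ 2) = a ^ 2 * Real.sin θ₂ ^ 2 := by
    have h := Real.sin_sq_add_cos_sq θ₂
    linear_combination (θ₂ * Real.cos θ₂ + a * Real.sin θ₂) * hc2 - θ₂ ^ 2 * h
  have hcos1 : Real.cos θ₁ = a * Real.sin θ₁ / θ₁ := by
    field_simp; linarith [hc1]
  have hcos2 : Real.cos θ₂ = a * Real.sin θ₂ / θ₂ := by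
    field_simp; linarith [hc2]
  have key :
      (Real.sin θ₁ ^ 2 / θ₁ ^ 2) *
          ((Real.pi / 2) * (Real.cos θ₂ * Real.sin θ₂ - θ₂) / θ₂ ^ 3) -
        (Real.sin θ₂ ^ 2 / θ₂ ^ 2) *
          ((Real.pi / 2) * (Real.cos θ₁ * Real.sin θ₁ - θ₁) / θ₁ ^ 3) =
      Real.pi * (Real.sin θ₁ ^ 2 - Real.sin θ₂ ^ 2) * (1 - a) /
        (2 * a * θ₁ ^ 2 * θ₂ ^ 2) := by
    rw [hcos1, hcos2]
    field_simp
    linear_combination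
      (Real.sin θ₂ ^ 2 * θ₂ ^ 2) * hp1 -
      (Real.sin θ₁ ^ 2 * θ₁ ^ 2) * hp2
  rw [key]
  apply div_ne_zero
  · exact mul_ne_zero (mul_ne_zero Real.pi_ne_zero (sub_ne_zero.mpr hsin))
      (sub_ne_zero.mpr (fun h => ha1 h.symm))
  · positivity
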